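/- For f = x^2 + y^2 + z^2 ∈ C[x,y,z] and g = x, the generalized Bernstein–Sato polynomial satisfies: there exists P ∈ D_X⟨σ⟩ with (σ+1)(σ+5/2) · x f^s = P · x f f^s, i.e., (s+1)(s+5/2) lies in the generalized Bernstein–Sato ideal of f at g = x; moreover (s+1) alone already satisfies the 1-generalized (m=1) functional equation b(σ) x f^s = Σ_k P_k h_k f^s with h_k ∈ ⟨f⟩. -/

import Mathlib

/-!
STATEMENT 17: For `f = x² + y² + z² ∈ ℂ[x,y,z]` and `g = x`, there exists
`P ∈ D_X⟨σ⟩` with `(σ+1)(σ+5/2) · x fˢ = P · x f fˢ`, i.e. `(s+1)(s+5/2)`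
lies in the generalized Bernstein–Sato ideal of `f` at `g = x`; moreover
`(s+1)` alone already satisfies the `m = 1` generalized functional equation
`b(σ) x fˢ = P h fˢ` with `h ∈ ⟨f⟩`.

Model (r = 1): `N_f = ℂ[x,y,z][f⁻¹,s] fˢ` is `S[s]`, `S = ℂ[x,y,z][f⁻¹]`;
`σ = -∂ₜ t` acts via `t · h(x,s)fˢ = h(x,s+1) f fˢ`,
`∂ₜ · h(x,s)fˢ = -s h(x,s-1) f⁻¹ fˢ`; `D_X⟨σ⟩` is generated by the `xᵢ`,
the `∂_{xᵢ}` and `σ`.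
-/

open Polynomial

theorem generalB_example (f : MvPolynomial (Fin 3) ℂ)
    (hfdef : f = MvPolynomial.X 0 ^ 2 + MvPolynomial.X 1 ^ 2 + MvPolynomial.X 2 ^ 2)
    (S : Type*) [CommRing S] [Algebra (MvPolynomial (Fin 3) ℂ) S] [Algebra ℂ S]
    [IsScalarTower ℂ (MvPolynomial (Fin 3) ℂ) S]
    [IsLocalization.Away f S]
    (D : Fin 3 → Derivation ℂ S S)
    (hD : ∀ i (r : MvPolynomial (Fin 3) ℂ),
      D i (algebraMap (MvPolynomial (Fin 3) ℂ) S r)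
        = algebraMap (MvPolynomial (Fin 3) ℂ) S (MvPolynomial.pderiv i r))
    (t : Module.End ℂ (Polynomial S))
    (ht : ∀ h : Polynomial S,
      t h = Polynomial.C (algebraMap (MvPolynomial (Fin 3) ℂ) S f) *
        (Polynomial.aeval (Polynomial.X + 1) h))
    (dt : Module.End ℂ (Polynomial S))
    (hdt : ∀ h : Polynomial S,
      dt h = -(Polynomial.X * Polynomial.C (IsLocalization.Away.invSelf (S := S) f) *
        (Polynomial.aeval (Polynomial.X - 1) h)))
    (xOp : Fin 3 → Module.End ℂ (Polynomial S))
    (hx : ∀ i (h : Polynomial S),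
      xOp i h = Polynomial.C (algebraMap (MvPolynomial (Fin 3) ℂ) S (MvPolynomial.X i)) * h)
    (dx : Fin 3 → Module.End ℂ (Polynomial S))
    (hdx : ∀ i (a : S) (m : ℕ),
      dx i (Polynomial.C a * Polynomial.X ^ m)
        = Polynomial.C (D i a) * Polynomial.X ^ m
          + Polynomial.X *
            Polynomial.C (algebraMap (MvPolynomial (Fin 3) ℂ) S (MvPolynomial.pderiv i f) *
              IsLocalization.Away.invSelf (S := S) f) *
            (Polynomial.C a * Polynomial.X ^ m)) :
    -- (σ+1)(σ+5/2) · (x fˢ) = P (x f fˢ) for some P ∈ D_X⟨σ⟩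
    (∃ P ∈ Algebra.adjoin ℂ
        ({Q | ∃ i : Fin 3, Q = xOp i ∨ Q = dx i} ∪ {-(dt * t)}),
      ((-(dt * t) + 1) * (-(dt * t) + (5/2 : ℂ) • 1))
          (Polynomial.C (algebraMap (MvPolynomial (Fin 3) ℂ) S (MvPolynomial.X 0)))
        = P (Polynomial.C (algebraMap (MvPolynomial (Fin 3) ℂ) S (MvPolynomial.X 0 * f)))) ∧
    -- (σ+1) · (x fˢ) = P (h fˢ) for some P ∈ D_X⟨σ⟩ and h ∈ ⟨f⟩ (the m = 1 equation)
    (∃ P ∈ Algebra.adjoin ℂ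
        ({Q | ∃ i : Fin 3, Q = xOp i ∨ Q = dx i} ∪ {-(dt * t)}),
      ∃ h ∈ Ideal.span {f},
      (-(dt * t) + 1)
          (Polynomial.C (algebraMap (MvPolynomial (Fin 3) ℂ) S (MvPolynomial.X 0)))
        = P (Polynomial.C (algebraMap (MvPolynomial (Fin 3) ℂ) S h))) := by
  classical
  set A := algebraMap (MvPolynomial (Fin 3) ℂ) S with hAdef
  set v := IsLocalization.Away.invSelf (S := S) f with hvdef
  have hu : A f * v = 1 := IsLocalization.Away.mul_invSelf f
  have hCu : (Polynomial.C (A f) : Polynomial S) * Polynomial.C v = 1 := by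
    rw [← Polynomial.C_mul, hu, Polynomial.C_1]
  have hCf : (Polynomial.C (A f) : Polynomial S)
      = Polynomial.C (A (MvPolynomial.X 0)) ^ 2 + Polynomial.C (A (MvPolynomial.X 1)) ^ 2
        + Polynomial.C (A (MvPolynomial.X 2)) ^ 2 := by
    rw [hfdef]; simp [map_add, map_pow]
  have hp : ∀ i, MvPolynomial.pderiv i f = 2 * MvPolynomial.X i := by
    intro i; fin_cases i <;> simp [hfdef]
  -- σ = -(∂ₜ t) acts as multiplication by X
  have hsig : ∀ h : Polynomial S, (-(dt * t)) h = Polynomial.X * h := by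
    intro h
    have h1 : (Polynomial.aeval (Polynomial.X - 1 : Polynomial S))
        ((Polynomial.aeval (Polynomial.X + 1 : Polynomial S)) h) = h := by
      rw [← Polynomial.aeval_algHom_apply]; simp
    have h2 : (dt * t) h = -(Polynomial.X * h) := by
      rw [Module.End.mul_apply, ht, hdt, map_mul, Polynomial.aeval_C, h1,
        Polynomial.algebraMap_eq]
      linear_combination (-(Polynomial.X * h)) * hCu
    rw [LinearMap.neg_apply, h2, neg_neg]
  -- smul as C-multiplication
  have hsm : ∀ (c : ℂ) (p : Polynomial S),
      c • p = Polynomial.C (algebraMap ℂ S c) * p := by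
    intro c p; rw [← Polynomial.algebraMap_apply, ← Algebra.smul_def]
  -- dx on constants and on degree-one terms
  have hdxC : ∀ i (a : S), dx i (Polynomial.C a)
      = Polynomial.C (D i a)
        + Polynomial.C (A (MvPolynomial.pderiv i f) * v * a) * Polynomial.X := by
    intro i a
    have h0 := hdx i a 0
    simp only [pow_zero, mul_one] at h0
    rw [h0]; simp only [map_mul]; ring
  have hdxX : ∀ i (a : S), dx i (Polynomial.C a * Polynomial.X)
      = Polynomial.C (D i a) * Polynomial.X
        + Polynomial.C (A (MvPolynomial.pderiv i f) * v * a) * Polynomial.X ^ 2 := by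
    intro i a
    have h0 := hdx i a 1
    simp only [pow_one] at h0
    rw [h0]; simp only [map_mul]; ring
  -- pderiv computations
  have hq0 : MvPolynomial.pderiv 0 (MvPolynomial.X 0 * f)
      = f + 2 * MvPolynomial.X 0 ^ 2 := by
    simp [MvPolynomial.pderiv_mul, hp]; ring
  have hq1 : MvPolynomial.pderiv 1 (MvPolynomial.X 0 * f)
      = 2 * (MvPolynomial.X 0 * MvPolynomial.X 1) := by
    simp [MvPolynomial.pderiv_mul, hp]; ring
  have hq2 : MvPolynomial.pderiv 2 (MvPolynomial.X 0 * f)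
      = 2 * (MvPolynomial.X 0 * MvPolynomial.X 2) := by
    simp [MvPolynomial.pderiv_mul, hp]; ring
  have hr0a : MvPolynomial.pderiv 0 (f + 2 * MvPolynomial.X 0 ^ 2)
      = 6 * MvPolynomial.X 0 := by
    rw [show (2 : MvPolynomial (Fin 3) ℂ) * MvPolynomial.X 0 ^ 2
      = MvPolynomial.X 0 ^ 2 + MvPolynomial.X 0 ^ 2 from two_mul _]
    simp [hp]; ring
  have hr0b : MvPolynomial.pderiv 0 ((2 : MvPolynomial (Fin 3) ℂ) * MvPolynomial.X 0 ^ 2)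
      = 4 * MvPolynomial.X 0 := by
    rw [show (2 : MvPolynomial (Fin 3) ℂ) * MvPolynomial.X 0 ^ 2
      = MvPolynomial.X 0 ^ 2 + MvPolynomial.X 0 ^ 2 from two_mul _]
    simp; ring
  have hr1 : MvPolynomial.pderiv 1
        ((2 : MvPolynomial (Fin 3) ℂ) * (MvPolynomial.X 0 * MvPolynomial.X 1))
      = 2 * MvPolynomial.X 0 := by
    rw [show (2 : MvPolynomial (Fin 3) ℂ) * (MvPolynomial.X 0 * MvPolynomial.X 1)
      = MvPolynomial.X 0 * MvPolynomial.X 1 + MvPolynomial.X 0 * MvPolynomial.X 1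
      from two_mul _]
    simp; ring
  have hr2 : MvPolynomial.pderiv 2
        ((2 : MvPolynomial (Fin 3) ℂ) * (MvPolynomial.X 0 * MvPolynomial.X 2))
      = 2 * MvPolynomial.X 0 := by
    rw [show (2 : MvPolynomial (Fin 3) ℂ) * (MvPolynomial.X 0 * MvPolynomial.X 2)
      = MvPolynomial.X 0 * MvPolynomial.X 2 + MvPolynomial.X 0 * MvPolynomial.X 2
      from two_mul _]
    simp; ring
  -- coefficient identities used in the first dx application
  have h10 : A (MvPolynomial.pderiv 0 f) * v * A (MvPolynomial.X 0 * f)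
      = A (2 * MvPolynomial.X 0 ^ 2) := by
    rw [hp 0]
    simp only [map_mul, map_pow, map_ofNat]
    linear_combination (2 * A (MvPolynomial.X 0) ^ 2) * hu
  have h11 : A (MvPolynomial.pderiv 1 f) * v * A (MvPolynomial.X 0 * f)
      = A (2 * (MvPolynomial.X 0 * MvPolynomial.X 1)) := by
    rw [hp 1]
    simp only [map_mul, map_pow, map_ofNat]
    linear_combination (2 * (A (MvPolynomial.X 0) * A (MvPolynomial.X 1))) * hu
  have h12 : A (MvPolynomial.pderiv 2 f) * v * A (MvPolynomial.X 0 * f)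
      = A (2 * (MvPolynomial.X 0 * MvPolynomial.X 2)) := by
    rw [hp 2]
    simp only [map_mul, map_pow, map_ofNat]
    linear_combination (2 * (A (MvPolynomial.X 0) * A (MvPolynomial.X 2))) * hu
  -- first applications of dx to q = C (A (X0 * f))
  have E0 : dx 0 (Polynomial.C (A (MvPolynomial.X 0 * f)))
      = Polynomial.C (A (f + 2 * MvPolynomial.X 0 ^ 2))
        + Polynomial.C (A (2 * MvPolynomial.X 0 ^ 2)) * Polynomial.X := by
    rw [hdxC, hD, hq0, h10]
  have E1 : dx 1 (Polynomial.C (A (MvPolynomial.X 0 * f)))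
      = Polynomial.C (A (2 * (MvPolynomial.X 0 * MvPolynomial.X 1)))
        + Polynomial.C (A (2 * (MvPolynomial.X 0 * MvPolynomial.X 1))) * Polynomial.X := by
    rw [hdxC, hD, hq1, h11]
  have E2 : dx 2 (Polynomial.C (A (MvPolynomial.X 0 * f)))
      = Polynomial.C (A (2 * (MvPolynomial.X 0 * MvPolynomial.X 2)))
        + Polynomial.C (A (2 * (MvPolynomial.X 0 * MvPolynomial.X 2))) * Polynomial.X := by
    rw [hdxC, hD, hq2, h12]
  -- second applications
  have F0 : dx 0 (dx 0 (Polynomial.C (A (MvPolynomial.X 0 * f))))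
      = (Polynomial.C (A (6 * MvPolynomial.X 0))
          + Polynomial.C (A (MvPolynomial.pderiv 0 f) * v * A (f + 2 * MvPolynomial.X 0 ^ 2))
            * Polynomial.X)
        + (Polynomial.C (A (4 * MvPolynomial.X 0)) * Polynomial.X
          + Polynomial.C (A (MvPolynomial.pderiv 0 f) * v * A (2 * MvPolynomial.X 0 ^ 2))
            * Polynomial.X ^ 2) := by
    rw [E0, map_add, hdxC, hdxX, hD, hD, hr0a, hr0b]
  have F1 : dx 1 (dx 1 (Polynomial.C (A (MvPolynomial.X 0 * f))))
      = (Polynomial.C (A (2 * MvPolynomial.X 0))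
          + Polynomial.C (A (MvPolynomial.pderiv 1 f) * v
              * A (2 * (MvPolynomial.X 0 * MvPolynomial.X 1))) * Polynomial.X)
        + (Polynomial.C (A (2 * MvPolynomial.X 0)) * Polynomial.X
          + Polynomial.C (A (MvPolynomial.pderiv 1 f) * v
              * A (2 * (MvPolynomial.X 0 * MvPolynomial.X 1))) * Polynomial.X ^ 2) := by
    rw [E1, map_add, hdxC, hdxX, hD, hr1]
  have F2 : dx 2 (dx 2 (Polynomial.C (A (MvPolynomial.X 0 * f))))
      = (Polynomial.C (A (2 * MvPolynomial.X 0))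
          + Polynomial.C (A (MvPolynomial.pderiv 2 f) * v
              * A (2 * (MvPolynomial.X 0 * MvPolynomial.X 2))) * Polynomial.X)
        + (Polynomial.C (A (2 * MvPolynomial.X 0)) * Polynomial.X
          + Polynomial.C (A (MvPolynomial.pderiv 2 f) * v
              * A (2 * (MvPolynomial.X 0 * MvPolynomial.X 2))) * Polynomial.X ^ 2) := by
    rw [E2, map_add, hdxC, hdxX, hD, hr2]
  -- numerical constants
  have hc3 : (Polynomial.C (algebraMap ℂ S (1/4)) : Polynomial S) * 10
      = Polynomial.C (algebraMap ℂ S (5/2)) := by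
    have h1 : ((10 : Polynomial S)) = Polynomial.C (algebraMap ℂ S (10 : ℂ)) := by rw [map_ofNat, map_ofNat]
    rw [h1, ← Polynomial.C_mul, ← map_mul]; norm_num
  have hc4 : (Polynomial.C (algebraMap ℂ S (1/4)) : Polynomial S) * 14
      = Polynomial.C (algebraMap ℂ S (5/2)) + 1 := by
    have h1 : ((14 : Polynomial S)) = Polynomial.C (algebraMap ℂ S (14 : ℂ)) := by rw [map_ofNat, map_ofNat]
    have h2 : ((1 : Polynomial S)) = Polynomial.C (algebraMap ℂ S (1 : ℂ)) := by rw [map_one, map_one]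
    rw [h1, h2, ← Polynomial.C_mul, ← map_mul, ← Polynomial.C_add, ← map_add]; norm_num
  have hc5 : (Polynomial.C (algebraMap ℂ S (1/4)) : Polynomial S) * 4 = 1 := by
    have h1 : ((4 : Polynomial S)) = Polynomial.C (algebraMap ℂ S (4 : ℂ)) := by rw [map_ofNat, map_ofNat]
    rw [h1, ← Polynomial.C_mul, ← map_mul]; norm_num
  have hcb : (Polynomial.C (algebraMap ℂ S (1/2)) : Polynomial S) * 2 = 1 := by
    have h1 : ((2 : Polynomial S)) = Polynomial.C (algebraMap ℂ S (2 : ℂ)) := by rw [map_ofNat, map_ofNat]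
    rw [h1, ← Polynomial.C_mul, ← map_mul]; norm_num
  -- generator membership
  have hdxmem : ∀ i, dx i ∈ Algebra.adjoin ℂ
      (({Q | ∃ i : Fin 3, Q = xOp i ∨ Q = dx i} : Set (Module.End ℂ (Polynomial S)))
        ∪ {-(dt * t)}) :=
    fun i => Algebra.subset_adjoin (Set.mem_union_left _ ⟨i, Or.inr rfl⟩)
  constructor
  · refine ⟨(1/4 : ℂ) • (dx 0 * dx 0 + dx 1 * dx 1 + dx 2 * dx 2),
      Subalgebra.smul_mem _ (add_mem (add_mem (mul_mem (hdxmem 0) (hdxmem 0))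
        (mul_mem (hdxmem 1) (hdxmem 1))) (mul_mem (hdxmem 2) (hdxmem 2))) _, ?_⟩
    simp only [Module.End.mul_apply, LinearMap.add_apply, LinearMap.smul_apply,
      Module.End.one_apply, hsig]
    rw [F0, F1, F2, hsm, hsm]
    simp only [hp, map_add, map_mul, map_pow, map_ofNat, hCf]
    set x := Polynomial.C (A (MvPolynomial.X 0)) with hxd
    set y := Polynomial.C (A (MvPolynomial.X 1)) with hyd
    set z := Polynomial.C (A (MvPolynomial.X 2)) with hzd
    set V := Polynomial.C v with hVd
    set α := Polynomial.C (algebraMap ℂ S (1/4 : ℂ)) with had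
    set γ := Polynomial.C (algebraMap ℂ S (5/2 : ℂ)) with hgd
    have R1 : (x ^ 2 + y ^ 2 + z ^ 2) * V = 1 := by rw [← hCf]; exact hCu
    linear_combination (-x) * hc3 + (-(x * Polynomial.X)) * hc4
      + (-(x * Polynomial.X ^ 2)) * hc5
      + (-(6 * α * x * Polynomial.X) - 4 * α * x * Polynomial.X ^ 2) * R1
  · refine ⟨(1/2 : ℂ) • dx 0, Subalgebra.smul_mem _ (hdxmem 0) _, f,
      Ideal.mem_span_singleton_self f, ?_⟩
    simp only [LinearMap.add_apply, LinearMap.smul_apply, Module.End.one_apply, hsig]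
    rw [hdxC, hD, hp 0, hsm]
    simp only [hp, map_add, map_mul, map_pow, map_ofNat, hCf]
    set x := Polynomial.C (A (MvPolynomial.X 0)) with hxd
    set y := Polynomial.C (A (MvPolynomial.X 1)) with hyd
    set z := Polynomial.C (A (MvPolynomial.X 2)) with hzd
    set V := Polynomial.C v with hVd
    set β := Polynomial.C (algebraMap ℂ S (1/2 : ℂ)) with hbd
    have R1 : (x ^ 2 + y ^ 2 + z ^ 2) * V = 1 := by rw [← hCf]; exact hCu
    linear_combination (-x - x * Polynomial.X) * hcb
      + (-(2 * β * x * Polynomial.X)) * R1
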